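/- For 0 ≤ δ₁ ≤ δ₂ < 1, ε₁ ∈ [0,1], ε₂ ∈ [0,1), m > 0, with t_a = ε₁m/(1-δ₁), t_b = m/(1-δ₂) - t_a, and t₂ = ε₂((1-δ₁)-ε₁(1-δ₂))m/((1-ε₂)(1-δ₁)(1-δ₂)), the total time satisfies t_a + t_b + t₂ = ((1-δ₁) - ε₁ε₂(1-δ₂))m/((1-ε₂)(1-δ₁)(1-δ₂)), and consequently with η = ((1-δ₁)-ε₁(1-δ₂))/((1-ε₂)(1-δ₂)), the rates R₁ = ηm/(t_a+t_b+t₂) and R₂ = m/(t_a+t_b+t₂) equal the corner point R₁ = ((1-δ₁)-ε₁(1-δ₂))/(1-ε₁ε₂(1-δ₂)/(1-δ₁)), R₂ = (1-ε₂)(1-δ₂)/(1-ε₁ε₂(1-δ₂)/(1-δ₁)). -/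

import Mathlib

theorem two_phase_total_time (δ₁ δ₂ ε₁ ε₂ m : ℝ)
    (hδ₁ : 0 ≤ δ₁) (hδ : δ₁ ≤ δ₂) (hδ₂ : δ₂ < 1)
    (hε₁ : ε₁ ∈ Set.Icc (0:ℝ) 1) (hε₂0 : 0 ≤ ε₂) (hε₂ : ε₂ < 1)
    (hm : 0 < m) (hpos : ε₁ * (1 - δ₂) < 1 - δ₁) :
    let t_a := ε₁ * m / (1 - δ₁)
    let t_b := m / (1 - δ₂) - t_a
    let t₂ := ε₂ * ((1 - δ₁) - ε₁ * (1 - δ₂)) * m / ((1 - ε₂) * (1 - δ₁) * (1 - δ₂))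
    let η := ((1 - δ₁) - ε₁ * (1 - δ₂)) / ((1 - ε₂) * (1 - δ₂))
    t_a + t_b + t₂ = ((1 - δ₁) - ε₁ * ε₂ * (1 - δ₂)) * m / ((1 - ε₂) * (1 - δ₁) * (1 - δ₂)) ∧
    η * m / (t_a + t_b + t₂) = ((1 - δ₁) - ε₁ * (1 - δ₂)) / (1 - ε₁ * ε₂ * (1 - δ₂) / (1 - δ₁)) ∧
    m / (t_a + t_b + t₂) = (1 - ε₂) * (1 - δ₂) / (1 - ε₁ * ε₂ * (1 - δ₂) / (1 - δ₁)) := by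
  obtain ⟨hε₁0, hε₁1⟩ := hε₁
  have h2 : (0:ℝ) < 1 - δ₂ := by linarith
  have h1 : (0:ℝ) < 1 - δ₁ := by linarith
  have he : (0:ℝ) < 1 - ε₂ := by linarith
  have hk : ε₁ * ε₂ * (1 - δ₂) ≤ ε₁ * (1 - δ₂) := by nlinarith [mul_nonneg hε₁0 h2.le]
  have hnum : (0:ℝ) < (1 - δ₁) - ε₁ * ε₂ * (1 - δ₂) := by linarith
  have key : ε₁ * m / (1 - δ₁) + (m / (1 - δ₂) - ε₁ * m / (1 - δ₁)) +
      ε₂ * ((1 - δ₁) - ε₁ * (1 - δ₂)) * m / ((1 - ε₂) * (1 - δ₁) * (1 - δ₂)) =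
      ((1 - δ₁) - ε₁ * ε₂ * (1 - δ₂)) * m / ((1 - ε₂) * (1 - δ₁) * (1 - δ₂)) := by
    field_simp
    ring
  have hden : (0:ℝ) < 1 - ε₁ * ε₂ * (1 - δ₂) / (1 - δ₁) := by
    rw [sub_pos, div_lt_one h1]; linarith
  have hT : (0:ℝ) < ((1 - δ₁) - ε₁ * ε₂ * (1 - δ₂)) * m / ((1 - ε₂) * (1 - δ₁) * (1 - δ₂)) :=
    div_pos (mul_pos hnum hm) (by positivity)
  refine ⟨key, ?_, ?_⟩ <;> rw [key]
  all_goals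
    rw [div_eq_div_iff hT.ne' hden.ne']
    field_simp
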